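/- A prediction sequence can have arbitrarily small distance to calibration but constant CDL: let ε ∈ (0, 1/4), T even, with p_t = 1/2 + ε and θ_t = 1 for T/2 rounds, and p_t = 1/2 − ε and θ_t = 0 for T/2 rounds. Then the distance to calibration is at most ε (witnessed by the calibrated sequence predicting 1/2 everywhere), while CDL ≥ CFDL_μ for the V-Bregman kink μ = 1/2 + 2ε, which is at least 1/4 − ε; hence CDL ≥ 1/4 − ε while distCal ≤ ε. -/
import Mathlib

/-- The V-Bregman divergence with kink μ. -/
noncomputable def VBreg (μ q qh : ℝ) : ℝ :=
  if (q < μ ∧ qh ≤ μ) ∨ (μ ≤ q ∧ μ ≤ qh) then 0 else |qh - μ| / max (1 - μ) μ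

lemma count_half (T : ℕ) (hTe : Even T) :
    (∑ t : Fin T, (if (t : ℕ) < T / 2 then (1:ℝ) else 0)) = (T:ℝ) / 2 := by
  rw [Fin.sum_univ_eq_sum_range (fun i => if i < T / 2 then (1:ℝ) else 0)]
  obtain ⟨k, hk⟩ := hTe
  subst hk
  have h2 : (k + k) / 2 = k := by omega
  rw [h2]
  have hcard : (Finset.range (k+k)).filter (· < k) = Finset.range k := by
    ext i; simp; omega
  rw [Finset.sum_ite, hcard]
  simp

theorem stmt_16 (ε : ℝ) (hε : ε ∈ Set.Ioo (0:ℝ) (1/4)) (T : ℕ) (hT : 0 < T) (hTe : Even T)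
    (p θ : Fin T → ℝ)
    (hp : ∀ t, p t = if (t : ℕ) < T / 2 then 1/2 + ε else 1/2 - ε)
    (hθ : ∀ t, θ t = if (t : ℕ) < T / 2 then 1 else 0) :
    (∃ ph : Fin T → ℝ,
      (∀ v ∈ Set.range ph,
        (∑ t, if ph t = v then θ t else 0) = v * (∑ t, if ph t = v then (1:ℝ) else 0)) ∧
      (1 / (T:ℝ)) * ∑ t, |p t - ph t| ≤ ε) ∧
    1/4 - ε ≤ (1 / (T:ℝ)) * (((T:ℝ) / 2) * VBreg (1/2 + 2*ε) (1/2 + ε) 1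
        + ((T:ℝ) / 2) * VBreg (1/2 + 2*ε) (1/2 - ε) 0) := by
  obtain ⟨hε0, hε4⟩ := hε
  have hTpos : (0:ℝ) < T := by exact_mod_cast hT
  constructor
  · refine ⟨fun _ => 1/2, ?_, ?_⟩
    · intro v hv
      obtain ⟨t, ht⟩ := hv
      simp only at ht
      subst ht
      have h1 : (∑ t : Fin T, θ t) = (T:ℝ)/2 := by
        calc (∑ t : Fin T, θ t) = ∑ t : Fin T, (if (t : ℕ) < T / 2 then (1:ℝ) else 0) := by
              exact Finset.sum_congr rfl (fun t _ => hθ t)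
          _ = (T:ℝ)/2 := count_half T hTe
      simp only [if_pos rfl, if_true]
      rw [h1]
      simp
      ring
    · have habs : ∀ t : Fin T, |p t - 1/2| = ε := by
        intro t
        rw [hp t]
        split <;> simp [abs_of_pos, abs_of_neg, hε0, abs_of_nonneg, le_of_lt hε0]
      simp only [habs, Finset.sum_const, Finset.card_univ, Fintype.card_fin, nsmul_eq_mul]
      rw [one_div, inv_mul_le_iff₀ hTpos]
  · have hv1 : VBreg (1/2 + 2*ε) (1/2 + ε) 1 = (1/2 - 2*ε) / (1/2 + 2*ε) := by
      rw [VBreg]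
      rw [if_neg (by push_neg; constructor <;> intro <;> nlinarith)]
      rw [abs_of_nonneg (by nlinarith), max_eq_right (by nlinarith)]
      ring_nf
    have hv2 : VBreg (1/2 + 2*ε) (1/2 - ε) 0 = 0 := by
      rw [VBreg, if_pos (Or.inl ⟨by nlinarith, by nlinarith⟩)]
    rw [hv1, hv2]
    have key : (1 / (T:ℝ)) * (((T:ℝ) / 2) * ((1/2 - 2*ε) / (1/2 + 2*ε)) + ((T:ℝ)/2) * 0)
        = (1/4 - ε) / (1/2 + 2*ε) := by
      field_simp
      ring
    rw [key, le_div_iff₀ (by nlinarith)]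
    nlinarith
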